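/- Every dominated function u : E^N → ℝ is differentiable Lebesgue-almost everywhere on E^N and is a viscosity subsolution of the critical Hamilton–Jacobi equation |d_x u|² = 2 U_κ(x) on all of E^N; that is, for every C¹ function ψ : E^N → ℝ such that u − ψ attains a maximum at a point x₀ ∈ E^N, one has |d_{x₀}ψ|² ≤ 2 U_κ(x₀) (this holds trivially when U_κ(x₀) = +∞). -/

import Mathlib

open MeasureTheory Set
open scoped ENNReal

noncomputable section NBody

variable {E : Type*} [NormedAddCommGroup E] [InnerProductSpace ℝ E] [FiniteDimensional ℝ E]

/-- The homogeneous potential `U_κ` of degree `-2κ`, with value `∞` at collisions. -/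
def pot {N : ℕ} (κ : ℝ) (m : Fin N → ℝ) (x : Fin N → E) : ℝ≥0∞ :=
  ∑ p ∈ Finset.univ.filter (fun p : Fin N × Fin N => p.1 < p.2),
    ENNReal.ofReal (m p.1 * m p.2) * ENNReal.ofReal ‖x p.1 - x p.2‖ ^ (-(2 * κ))

/-- `γ` is absolutely continuous on `[a,b]`, with a.e. derivative `γ'`
(integrable and satisfying the fundamental theorem of calculus). -/
def ACPair {N : ℕ} (γ γ' : ℝ → Fin N → E) (a b : ℝ) : Prop :=
  IntervalIntegrable γ' volume a b ∧
    ∀ t ∈ Icc a b, γ t = γ a + ∫ s in a..t, γ' s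

/-- Lagrangian action of an absolutely continuous curve on `[a,b]`:
kinetic part (w.r.t. the mass scalar product) plus potential part. -/
def action {N : ℕ} (κ : ℝ) (m : Fin N → ℝ) (γ γ' : ℝ → Fin N → E) (a b : ℝ) : ℝ≥0∞ :=
  ∫⁻ t in Ioc a b,
    (ENNReal.ofReal ((1 / 2) * ∑ i, m i * ‖γ' t i‖ ^ 2) + pot κ m (γ t))

/-- `φ(x,y,T)`: minimal action among absolutely continuous curves binding `x` to `y`
in time `T`. -/
def phiT {N : ℕ} (κ : ℝ) (m : Fin N → ℝ) (x y : Fin N → E) (T : ℝ) : ℝ≥0∞ :=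
  ⨅ (γ : ℝ → Fin N → E) (γ' : ℝ → Fin N → E)
    (_ : ACPair γ γ' 0 T ∧ γ 0 = x ∧ γ T = y), action κ m γ γ' 0 T

/-- The critical (Mañé) action potential `φ(x,y) = inf_{T>0} φ(x,y,T)`. -/
def phi {N : ℕ} (κ : ℝ) (m : Fin N → ℝ) (x y : Fin N → E) : ℝ≥0∞ :=
  ⨅ (T : ℝ) (_ : 0 < T), phiT κ m x y T

/-- A function is dominated if `u(x) - u(y) ≤ φ(x,y)` for all `x, y`. -/
def Dominated {N : ℕ} (κ : ℝ) (m : Fin N → ℝ) (u : (Fin N → E) → ℝ) : Prop :=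
  ∀ x y, ENNReal.ofReal (u x - u y) ≤ phi κ m x y

/-- The Lax–Oleinik semigroup `T_t⁻ u (x) = inf_y (u(y) + φ(x,y,t))`, with `T_0⁻ u = u`. -/
def lax {N : ℕ} (κ : ℝ) (m : Fin N → ℝ) (u : (Fin N → E) → ℝ) (t : ℝ)
    (x : Fin N → E) : EReal :=
  if t = 0 then (u x : EReal)
  else ⨅ y : Fin N → E, ((u y : EReal) + ((phiT κ m x y t : ℝ≥0∞) : EReal))

/-- Squared dual norm (w.r.t. the mass scalar product) of a linear form on `E^N`:
`|p|² = ∑ᵢ mᵢ⁻¹ ‖pᵢ‖²`. -/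
def dualNormSq {N : ℕ} (m : Fin N → ℝ) (p : (Fin N → E) →L[ℝ] ℝ) : ℝ :=
  ∑ i, (m i)⁻¹ * ‖p.comp (LinearMap.single ℝ (fun _ : Fin N => E) i).toContinuousLinearMap‖ ^ 2

end NBody

noncomputable section Helpers

open Filter
open scoped NNReal Topology
set_option linter.unusedSectionVars false
set_option linter.unusedVariables false
set_option maxHeartbeats 1000000

variable {E : Type*} [NormedAddCommGroup E] [InnerProductSpace ℝ E] [FiniteDimensional ℝ E]
variable {N : ℕ}

/-- The finset of ordered pairs. -/
def pairs (N : ℕ) : Finset (Fin N × Fin N) :=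
  Finset.univ.filter (fun p : Fin N × Fin N => p.1 < p.2)

/-- Real-valued version of the potential. -/
def Preal (κ : ℝ) (m : Fin N → ℝ) (x : Fin N → E) : ℝ :=
  ∑ p ∈ pairs N, m p.1 * m p.2 * ‖x p.1 - x p.2‖ ^ (-(2 * κ))

lemma Preal_nonneg (κ : ℝ) (m : Fin N → ℝ) (hm : ∀ i, 0 < m i) (x : Fin N → E) :
    0 ≤ Preal κ m x :=
  Finset.sum_nonneg fun p _ => mul_nonneg (mul_nonneg (hm _).le (hm _).le)
    (Real.rpow_nonneg (norm_nonneg _) _)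

lemma pot_eq_ofReal (κ : ℝ) (m : Fin N → ℝ) (hm : ∀ i, 0 < m i) (x : Fin N → E)
    (hx : ∀ p ∈ pairs N, x p.1 ≠ x p.2) :
    pot κ m x = ENNReal.ofReal (Preal κ m x) := by
  rw [Preal, ENNReal.ofReal_sum_of_nonneg (fun p _ => mul_nonneg
    (mul_nonneg (hm _).le (hm _).le) (Real.rpow_nonneg (norm_nonneg _) _))]
  refine Finset.sum_congr rfl fun p hp => ?_
  have hn : 0 < ‖x p.1 - x p.2‖ := norm_pos_iff.2 (sub_ne_zero.2 (hx p hp))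
  rw [ENNReal.ofReal_mul (mul_nonneg (hm _).le (hm _).le),
    ENNReal.ofReal_rpow_of_pos hn]

lemma sep_of_pot_ne_top {κ : ℝ} (hκ : 0 < κ) (m : Fin N → ℝ) (hm : ∀ i, 0 < m i)
    {x : Fin N → E} (h : pot κ m x ≠ ⊤) :
    ∀ p ∈ pairs N, x p.1 ≠ x p.2 := by
  intro p hp heq
  apply h
  refine ENNReal.sum_eq_top.2 ⟨p, hp, ?_⟩
  rw [heq, sub_self, norm_zero, ENNReal.ofReal_zero,
    ENNReal.zero_rpow_of_neg (by linarith), ENNReal.mul_top]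
  exact (ENNReal.ofReal_pos.2 (mul_pos (hm _) (hm _))).ne'

lemma continuousAt_Preal (κ : ℝ) (m : Fin N → ℝ) {x : Fin N → E}
    (hx : ∀ p ∈ pairs N, x p.1 ≠ x p.2) :
    ContinuousAt (fun z : Fin N → E => Preal κ m z) x := by
  apply tendsto_finset_sum
  intro p hp
  have hc : ContinuousAt (fun z : Fin N → E => ‖z p.1 - z p.2‖) x :=
    (((continuous_apply p.1).sub (continuous_apply p.2)).norm).continuousAt
  have hrc : ContinuousAt (fun z : Fin N → E => ‖z p.1 - z p.2‖ ^ (-(2 * κ))) x :=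
    hc.rpow_const (Or.inl (norm_pos_iff.2 (sub_ne_zero.2 (hx p hp))).ne')
  exact continuousAt_const.mul hrc

/-- The action of the straight line `s ↦ x + s • v` bounds `phi`. -/
lemma phi_line_le (κ : ℝ) (m : Fin N → ℝ) (x v : Fin N → E) {T : ℝ} (hT : 0 < T)
    {C : ℝ≥0∞} (hC : ∀ s ∈ Ioc (0:ℝ) T, pot κ m (x + s • v) ≤ C) :
    phi κ m x (x + T • v) ≤
      ENNReal.ofReal (T * ((1 / 2) * ∑ i, m i * ‖v i‖ ^ 2)) + C * ENNReal.ofReal T := by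
  set γ : ℝ → Fin N → E := fun s => x + s • v with hγ
  have hAC : ACPair γ (fun _ => v) 0 T := by
    refine ⟨intervalIntegrable_const, fun t ht => ?_⟩
    simp [hγ, intervalIntegral.integral_const, sub_zero, add_assoc]
  have h1 : phi κ m x (x + T • v) ≤ action κ m γ (fun _ => v) 0 T := by
    refine le_trans (iInf₂_le T hT) ?_
    exact iInf_le_of_le γ (iInf_le_of_le (fun _ => v)
      (iInf_le_of_le ⟨hAC, by simp [hγ], rfl⟩ le_rfl))
  refine h1.trans ?_
  have hvol : volume (Ioc (0:ℝ) T) = ENNReal.ofReal T := by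
    simp [Real.volume_Ioc]
  calc action κ m γ (fun _ => v) 0 T
      ≤ ∫⁻ _ in Ioc (0:ℝ) T,
          (ENNReal.ofReal ((1 / 2) * ∑ i, m i * ‖v i‖ ^ 2) + C) := by
        refine setLIntegral_mono' measurableSet_Ioc fun t ht => ?_
        exact add_le_add le_rfl (hC t ht)
    _ = (ENNReal.ofReal ((1 / 2) * ∑ i, m i * ‖v i‖ ^ 2) + C) * ENNReal.ofReal T := by
        rw [setLIntegral_const, hvol]
    _ = ENNReal.ofReal (T * ((1 / 2) * ∑ i, m i * ‖v i‖ ^ 2)) + C * ENNReal.ofReal T := by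
        rw [add_mul, mul_comm (ENNReal.ofReal ((1 / 2) * ∑ i, m i * ‖v i‖ ^ 2)),
          ← ENNReal.ofReal_mul hT.le]

lemma real_le_of_forall_pos_le_add {a b : ℝ} (h : ∀ ε > 0, a ≤ b + ε) : a ≤ b := by
  by_contra hc
  push_neg at hc
  have := h ((a - b) / 2) (by linarith)
  linarith

lemma pairs_nonempty (hN : 2 ≤ N) : (pairs N).Nonempty := by
  refine ⟨(⟨0, by omega⟩, ⟨1, by omega⟩), ?_⟩
  simp [pairs, Fin.mk_lt_mk]

/-- Local Lipschitz property of dominated functions, on balls avoiding collisions. -/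
lemma exists_lipschitz_ball {κ : ℝ} (hκ : 0 < κ) (hN : 2 ≤ N)
    (m : Fin N → ℝ) (hm : ∀ i, 0 < m i) (u : (Fin N → E) → ℝ) (hu : Dominated κ m u)
    {x₀ : Fin N → E} (hx₀ : ∀ p ∈ pairs N, x₀ p.1 ≠ x₀ p.2) :
    ∃ r > 0, ∃ L : ℝ≥0, LipschitzOnWith L u (Metric.ball x₀ r) := by
  have hne := pairs_nonempty hN
  set δ := (pairs N).inf' hne fun p => ‖x₀ p.1 - x₀ p.2‖ with hδdef
  have hδ : 0 < δ := by
    rw [hδdef, Finset.lt_inf'_iff]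
    exact fun p hp => norm_pos_iff.2 (sub_ne_zero.2 (hx₀ p hp))
  -- separation on the ball of radius δ/4
  have hsep : ∀ z ∈ Metric.closedBall x₀ (δ / 4), ∀ p ∈ pairs N,
      δ / 2 ≤ ‖z p.1 - z p.2‖ := by
    intro z hz p hp
    have hz' : ‖z - x₀‖ ≤ δ / 4 := by
      rw [← dist_eq_norm]; exact Metric.mem_closedBall.1 hz
    have h1 : ‖z p.1 - x₀ p.1‖ ≤ δ / 4 :=
      le_trans (norm_le_pi_norm (z - x₀) p.1) hz'
    have h2 : ‖z p.2 - x₀ p.2‖ ≤ δ / 4 :=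
      le_trans (norm_le_pi_norm (z - x₀) p.2) hz'
    have h3 : δ ≤ ‖x₀ p.1 - x₀ p.2‖ := Finset.inf'_le _ hp
    have h4 : ‖x₀ p.1 - x₀ p.2‖ ≤ ‖x₀ p.1 - z p.1‖ + ‖z p.1 - z p.2‖ + ‖z p.2 - x₀ p.2‖ := by
      calc ‖x₀ p.1 - x₀ p.2‖
          = ‖(x₀ p.1 - z p.1) + (z p.1 - z p.2) + (z p.2 - x₀ p.2)‖ := by
            congr 1; abel
        _ ≤ ‖x₀ p.1 - z p.1‖ + ‖z p.1 - z p.2‖ + ‖z p.2 - x₀ p.2‖ :=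
            norm_add₃_le
    have h5 : ‖x₀ p.1 - z p.1‖ = ‖z p.1 - x₀ p.1‖ := norm_sub_rev _ _
    linarith
  set Cb := ∑ p ∈ pairs N, m p.1 * m p.2 * (δ / 2) ^ (-(2 * κ)) with hCbdef
  have hCb0 : 0 ≤ Cb :=
    Finset.sum_nonneg fun p _ => mul_nonneg (mul_nonneg (hm _).le (hm _).le)
      (Real.rpow_nonneg (by linarith) _)
  have hpotle : ∀ z ∈ Metric.closedBall x₀ (δ / 4), pot κ m z ≤ ENNReal.ofReal Cb := by
    intro z hz
    have hzsep : ∀ p ∈ pairs N, z p.1 ≠ z p.2 := by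
      intro p hp
      have := hsep z hz p hp
      intro heq
      rw [heq, sub_self, norm_zero] at this
      linarith
    rw [pot_eq_ofReal κ m hm z hzsep]
    refine ENNReal.ofReal_le_ofReal (Finset.sum_le_sum fun p hp => ?_)
    refine mul_le_mul_of_nonneg_left ?_ (mul_nonneg (hm _).le (hm _).le)
    exact Real.rpow_le_rpow_of_nonpos (by linarith) (hsep z hz p hp) (by linarith)
  set M := ∑ i, m i with hMdef
  have hM0 : 0 ≤ M := Finset.sum_nonneg fun i _ => (hm i).le
  set L0 := M / 2 + Cb with hL0def
  have hL00 : 0 ≤ L0 := by positivity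
  have hkey : ∀ x ∈ Metric.ball x₀ (δ / 16), ∀ y ∈ Metric.ball x₀ (δ / 16),
      u x - u y ≤ L0 * dist x y := by
    intro x hx y hy
    rcases eq_or_ne x y with rfl | hxy
    · simp
    set T := ‖y - x‖ with hTdef
    have hT : 0 < T := norm_pos_iff.2 (sub_ne_zero.2 hxy.symm)
    set v := T⁻¹ • (y - x) with hvdef
    have hv : ‖v‖ = 1 := by
      rw [hvdef, norm_smul, Real.norm_eq_abs, abs_inv, abs_of_pos hT, ← hTdef,
        inv_mul_cancel₀ hT.ne']
    have hxv : x + T • v = y := by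
      rw [hvdef, smul_smul, mul_inv_cancel₀ hT.ne', one_smul]
      abel
    have hdxx : ‖x - x₀‖ < δ / 16 := by
      rw [← dist_eq_norm]; exact Metric.mem_ball.1 hx
    have hdyx : ‖y - x₀‖ < δ / 16 := by
      rw [← dist_eq_norm]; exact Metric.mem_ball.1 hy
    have hTb : T < δ / 8 := by
      have : ‖y - x‖ ≤ ‖y - x₀‖ + ‖x₀ - x‖ := norm_sub_le_norm_sub_add_norm_sub _ _ _
      have h' : ‖x₀ - x‖ = ‖x - x₀‖ := norm_sub_rev _ _
      rw [hTdef]; linarith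
    have hseg : ∀ s ∈ Ioc (0:ℝ) T, x + s • v ∈ Metric.closedBall x₀ (δ / 4) := by
      intro s hs
      have hb : ‖x + s • v - x₀‖ ≤ ‖x - x₀‖ + s * ‖v‖ := by
        calc ‖x + s • v - x₀‖ = ‖(x - x₀) + s • v‖ := by congr 1; abel
          _ ≤ ‖x - x₀‖ + ‖s • v‖ := norm_add_le _ _
          _ = ‖x - x₀‖ + s * ‖v‖ := by
              rw [norm_smul, Real.norm_eq_abs, abs_of_pos hs.1]
      rw [Metric.mem_closedBall, dist_eq_norm]
      rw [hv] at hb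
      have := hs.2
      linarith
    have hK0 : 0 ≤ ∑ i, m i * ‖v i‖ ^ 2 :=
      Finset.sum_nonneg fun i _ => mul_nonneg (hm i).le (sq_nonneg _)
    have hKM : ∑ i, m i * ‖v i‖ ^ 2 ≤ M := by
      refine Finset.sum_le_sum fun i _ => ?_
      have h1 : ‖v i‖ ≤ 1 := le_trans (norm_le_pi_norm v i) hv.le
      have h2 : ‖v i‖ ^ 2 ≤ 1 := by nlinarith [norm_nonneg (v i)]
      have h3 := mul_le_mul_of_nonneg_left h2 (hm i).le
      simpa using h3
    have hmain := (hu x (x + T • v)).trans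
      (phi_line_le κ m x v hT (fun s hs => hpotle _ (hseg s hs)))
    rw [hxv] at hmain
    have hcomb : ENNReal.ofReal (u x - u y) ≤
        ENNReal.ofReal (T * ((1 / 2) * ∑ i, m i * ‖v i‖ ^ 2) + Cb * T) := by
      rw [ENNReal.ofReal_add (by positivity) (by positivity),
        ENNReal.ofReal_mul hCb0]
      exact hmain
    have h2 : u x - u y ≤ T * ((1 / 2) * ∑ i, m i * ‖v i‖ ^ 2) + Cb * T :=
      (ENNReal.ofReal_le_ofReal_iff (by positivity)).1 hcomb
    have hdist : T = dist x y := by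
      rw [dist_eq_norm, hTdef, norm_sub_rev]
    rw [← hdist, hL0def]
    have h4 : T * ((1 / 2) * ∑ i, m i * ‖v i‖ ^ 2) ≤ T * (M / 2) := by
      apply mul_le_mul_of_nonneg_left _ hT.le
      linarith
    calc u x - u y ≤ T * ((1 / 2) * ∑ i, m i * ‖v i‖ ^ 2) + Cb * T := h2
      _ ≤ T * (M / 2) + Cb * T := by linarith
      _ = (M / 2 + Cb) * T := by ring
  refine ⟨δ / 16, by positivity, L0.toNNReal, ?_⟩
  rw [lipschitzOnWith_iff_dist_le_mul]
  intro x hx y hy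
  rw [Real.coe_toNNReal _ hL00, Real.dist_eq, abs_sub_le_iff]
  exact ⟨hkey x hx y hy, by rw [dist_comm]; exact hkey y hy x hx⟩

/-- Key directional inequality at a maximum point of `u - ψ`. -/
lemma neg_fderiv_le {κ : ℝ} (hκ : 0 < κ) (m : Fin N → ℝ) (hm : ∀ i, 0 < m i)
    (u : (Fin N → E) → ℝ) (hu : Dominated κ m u)
    (ψ : (Fin N → E) → ℝ) (hψ : ContDiff ℝ 1 ψ) (x₀ : Fin N → E)
    (hmax : IsMaxOn (fun x => u x - ψ x) univ x₀)
    (hx₀ : ∀ p ∈ pairs N, x₀ p.1 ≠ x₀ p.2) (v : Fin N → E) :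
    -(fderiv ℝ ψ x₀ v) ≤ (1 / 2) * (∑ i, m i * ‖v i‖ ^ 2) + Preal κ m x₀ := by
  refine real_le_of_forall_pos_le_add fun ε hε => ?_
  have hcont := continuousAt_Preal κ m hx₀
  have h1 : ∀ᶠ z in 𝓝 x₀, Preal κ m z < Preal κ m x₀ + ε :=
    Filter.Tendsto.eventually_lt_const (lt_add_of_pos_right _ hε) hcont
  have h2 : ∀ᶠ z in 𝓝 x₀, ∀ p ∈ pairs N, z p.1 ≠ z p.2 := by
    rw [eventually_all_finset]
    intro p hp
    have hc : ContinuousAt (fun z : Fin N → E => z p.1 - z p.2) x₀ :=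
      ((continuous_apply p.1).sub (continuous_apply p.2)).continuousAt
    filter_upwards [hc.eventually_ne (sub_ne_zero.2 (hx₀ p hp))] with z hz
    exact sub_ne_zero.1 hz
  obtain ⟨δ, hδpos, hδ⟩ := Metric.eventually_nhds_iff.1 (h1.and h2)
  set p := fderiv ℝ ψ x₀ with hpdef
  set K := ∑ i, m i * ‖v i‖ ^ 2 with hKdef
  have hK0 : 0 ≤ K :=
    Finset.sum_nonneg fun i _ => mul_nonneg (hm i).le (sq_nonneg _)
  have hP0 : 0 ≤ Preal κ m x₀ := Preal_nonneg κ m hm x₀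
  have hδ' : 0 < δ / (‖v‖ + 1) := by positivity
  have hquot : ∀ T, 0 < T → T < δ / (‖v‖ + 1) →
      ψ x₀ - ψ (x₀ + T • v) ≤ T * ((1 / 2) * K + Preal κ m x₀ + ε) := by
    intro T hT hTδ
    have hC : ∀ s ∈ Ioc (0:ℝ) T,
        pot κ m (x₀ + s • v) ≤ ENNReal.ofReal (Preal κ m x₀ + ε) := by
      intro s hs
      have hdist : dist (x₀ + s • v) x₀ < δ := by
        rw [dist_eq_norm, add_sub_cancel_left, norm_smul, Real.norm_eq_abs,
          abs_of_pos hs.1]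
        have h5 : s * ‖v‖ ≤ T * (‖v‖ + 1) := by
          nlinarith [norm_nonneg v, hs.2, hs.1]
        have h6 : T * (‖v‖ + 1) < δ := (lt_div_iff₀ (by positivity)).1 hTδ
        linarith
      obtain ⟨hlt, hne⟩ := hδ hdist
      rw [pot_eq_ofReal κ m hm _ hne]
      exact ENNReal.ofReal_le_ofReal hlt.le
    have hmain := (hu x₀ (x₀ + T • v)).trans (phi_line_le κ m x₀ v hT hC)
    have hψle : ψ x₀ - ψ (x₀ + T • v) ≤ u x₀ - u (x₀ + T • v) := by
      have h7 := (isMaxOn_iff.1 hmax) (x₀ + T • v) (mem_univ _)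
      linarith
    have heq : ENNReal.ofReal (T * ((1 / 2) * K) + (Preal κ m x₀ + ε) * T)
        = ENNReal.ofReal (T * ((1 / 2) * K)) +
          ENNReal.ofReal (Preal κ m x₀ + ε) * ENNReal.ofReal T := by
      rw [ENNReal.ofReal_add (mul_nonneg hT.le (mul_nonneg (by norm_num) hK0))
        (mul_nonneg (add_nonneg hP0 hε.le) hT.le),
        ENNReal.ofReal_mul (add_nonneg hP0 hε.le)]
    have hcomb : ENNReal.ofReal (ψ x₀ - ψ (x₀ + T • v)) ≤
        ENNReal.ofReal (T * ((1 / 2) * K) + (Preal κ m x₀ + ε) * T) := by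
      rw [heq]
      exact le_trans (ENNReal.ofReal_le_ofReal hψle) hmain
    have h8 : ψ x₀ - ψ (x₀ + T • v) ≤
        T * ((1 / 2) * K) + (Preal κ m x₀ + ε) * T :=
      (ENNReal.ofReal_le_ofReal_iff (by positivity)).1 hcomb
    calc ψ x₀ - ψ (x₀ + T • v)
        ≤ T * ((1 / 2) * K) + (Preal κ m x₀ + ε) * T := h8
      _ = T * ((1 / 2) * K + Preal κ m x₀ + ε) := by ring
  have hψd : HasFDerivAt ψ p x₀ := (hψ.differentiable one_ne_zero x₀).hasFDerivAt
  have hψd' : HasFDerivAt ψ p (x₀ + (0:ℝ) • v) := by simpa using hψd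
  have hline : HasDerivAt (fun T : ℝ => x₀ + T • v) v 0 := by
    simpa using ((hasDerivAt_id (0:ℝ)).smul_const v).const_add x₀
  have hcomp : HasDerivAt (fun T : ℝ => ψ (x₀ + T • v)) (p v) 0 :=
    hψd'.comp_hasDerivAt 0 hline
  have hslope := hasDerivAt_iff_tendsto_slope.1 hcomp
  have hmono : 𝓝[>] (0:ℝ) ≤ 𝓝[≠] (0:ℝ) :=
    nhdsWithin_mono _ fun t ht => Set.mem_compl_singleton_iff.2 (ne_of_gt ht)
  have hslope' : Tendsto (fun T => -(slope (fun T : ℝ => ψ (x₀ + T • v)) 0 T))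
      (𝓝[>] (0:ℝ)) (𝓝 (-(p v))) := (hslope.mono_left hmono).neg
  refine le_of_tendsto hslope' ?_
  filter_upwards [Ioo_mem_nhdsGT_of_mem ⟨le_refl (0:ℝ), hδ'⟩] with T hT
  have hq := hquot T hT.1 hT.2
  simp only [slope_def_field, zero_smul, add_zero, sub_zero]
  have h9 : (ψ x₀ - ψ (x₀ + T • v)) / T ≤ (1 / 2) * K + Preal κ m x₀ + ε :=
    (div_le_iff₀ hT.1).2 (by linarith)
  calc -((ψ (x₀ + T • v) - ψ x₀) / T) = (ψ x₀ - ψ (x₀ + T • v)) / T := by ring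
    _ ≤ _ := h9

end Helpers

/-- Dominated functions are differentiable almost everywhere (w.r.t. any Haar measure on
`E^N`) and are viscosity subsolutions of the critical Hamilton–Jacobi equation
`|dₓu|² = 2 U_κ(x)` on all of `E^N`. -/
theorem dominated_viscosity_subsolution
    {E : Type*} [NormedAddCommGroup E] [InnerProductSpace ℝ E] [FiniteDimensional ℝ E]
    [Nontrivial E] [MeasurableSpace E] [BorelSpace E]
    (κ : ℝ) (hκ : κ ∈ Ioo (0:ℝ) 1) (N : ℕ) (hN : 2 ≤ N)
    (m : Fin N → ℝ) (hm : ∀ i, 0 < m i)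
    (u : (Fin N → E) → ℝ) (hu : Dominated κ m u) :
    (∀ μ : Measure (Fin N → E), μ.IsAddHaarMeasure →
      ∀ᵐ x ∂μ, DifferentiableAt ℝ u x) ∧
    (∀ ψ : (Fin N → E) → ℝ, ContDiff ℝ 1 ψ → ∀ x₀ : Fin N → E,
      IsMaxOn (fun x => u x - ψ x) univ x₀ →
      ENNReal.ofReal (dualNormSq m (fderiv ℝ ψ x₀)) ≤ 2 * pot κ m x₀) := by
  obtain ⟨hκ0, hκ1⟩ := hκ
  constructor
  · -- almost everywhere differentiability
    intro μ hμ
    haveI := hμ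
    rw [MeasureTheory.ae_iff]
    set S := {x : Fin N → E | ¬DifferentiableAt ℝ u x} with hSdef
    set Ω := {x : Fin N → E | ∀ p ∈ pairs N, x p.1 ≠ x p.2} with hΩdef
    have hΩc : μ Ωᶜ = 0 := by
      have hsub : Ωᶜ ⊆ ⋃ p ∈ pairs N, {x : Fin N → E | x p.1 = x p.2} := by
        intro x hx
        simp only [hΩdef, mem_compl_iff, mem_setOf_eq, not_forall] at hx
        obtain ⟨q, hq, hqe⟩ := hx
        exact mem_biUnion hq (not_ne_iff.1 hqe)
      refine measure_mono_null hsub ?_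
      refine (measure_biUnion_null_iff (pairs N).countable_toSet).2 fun q hq => ?_
      obtain ⟨e, he⟩ := exists_ne (0 : E)
      set Lq : (Fin N → E) →ₗ[ℝ] E :=
        (LinearMap.proj q.1 : ((_ : Fin N) → E) →ₗ[ℝ] E)
          - (LinearMap.proj q.2 : ((_ : Fin N) → E) →ₗ[ℝ] E) with hLq
      have hker : {x : Fin N → E | x q.1 = x q.2} =
          (LinearMap.ker Lq : Set (Fin N → E)) := by
        ext x
        simp [hLq, LinearMap.mem_ker, sub_eq_zero]
      rw [hker]
      apply Measure.addHaar_submodule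
      intro htop
      have hqne : q.1 ≠ q.2 := by
        have hlt : q.1 < q.2 := by
          simpa [pairs] using hq
        exact hlt.ne
      have hmem : Pi.single q.2 e ∈ LinearMap.ker Lq := htop.symm ▸ Submodule.mem_top
      rw [LinearMap.mem_ker] at hmem
      simp [hLq, Pi.single_eq_of_ne hqne] at hmem
      exact he hmem
    have hSΩ : μ (S ∩ Ω) = 0 := by
      refine measure_null_of_locally_null _ fun x hx => ?_
      obtain ⟨r, hr, L, hL⟩ := exists_lipschitz_ball hκ0 hN m hm u hu hx.2
      have hae : ∀ᵐ y ∂μ, y ∈ Metric.ball x r →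
          DifferentiableWithinAt ℝ u (Metric.ball x r) y :=
        hL.ae_differentiableWithinAt_of_mem
      have h0 : μ {y | ¬(y ∈ Metric.ball x r →
          DifferentiableWithinAt ℝ u (Metric.ball x r) y)} = 0 := ae_iff.1 hae
      refine ⟨(S ∩ Ω) ∩ Metric.ball x r,
        inter_mem_nhdsWithin _ (Metric.ball_mem_nhds x hr), ?_⟩
      refine measure_mono_null (fun y hy => ?_) h0
      intro himp
      exact hy.1.1
        ((himp hy.2).differentiableAt (Metric.isOpen_ball.mem_nhds hy.2))
    have hincl : S ⊆ Ωᶜ ∪ (S ∩ Ω) := by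
      intro x hx
      by_cases hxΩ : x ∈ Ω
      · exact Or.inr ⟨hx, hxΩ⟩
      · exact Or.inl hxΩ
    exact measure_mono_null hincl (measure_union_null hΩc hSΩ)
  · -- viscosity subsolution property
    intro ψ hψ x₀ hmax
    by_cases htop : pot κ m x₀ = ⊤
    · rw [htop, ENNReal.mul_top (by norm_num)]
      exact le_top
    · have hsep := sep_of_pot_ne_top hκ0 m hm htop
      set p := fderiv ℝ ψ x₀ with hpdef
      set pc : Fin N → (E →L[ℝ] ℝ) := fun i =>
        p.comp (LinearMap.single ℝ (fun _ : Fin N => E) i).toContinuousLinearMap with hpc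
      set w : Fin N → E := fun i => (InnerProductSpace.toDual ℝ E).symm (pc i) with hw
      set v : Fin N → E := fun i => -((m i)⁻¹ • w i) with hv
      have hdual : dualNormSq m p = ∑ i, (m i)⁻¹ * ‖pc i‖ ^ 2 := rfl
      have hwnorm : ∀ i, ‖w i‖ = ‖pc i‖ := fun i => LinearIsometryEquiv.norm_map _ _
      have hpw : ∀ i, pc i (w i) = ‖pc i‖ ^ 2 := by
        intro i
        have h1 : (inner ℝ (w i) (w i) : ℝ) = pc i (w i) :=
          InnerProductSpace.toDual_symm_apply
        rw [← h1, real_inner_self_eq_norm_sq, hwnorm]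
      have hKv : ∑ i, m i * ‖v i‖ ^ 2 = dualNormSq m p := by
        rw [hdual]
        refine Finset.sum_congr rfl fun i _ => ?_
        have h1 : ‖v i‖ = (m i)⁻¹ * ‖pc i‖ := by
          show ‖-((m i)⁻¹ • w i)‖ = (m i)⁻¹ * ‖pc i‖
          rw [norm_neg, norm_smul, Real.norm_eq_abs, abs_of_pos (inv_pos.2 (hm i)),
            hwnorm]
        rw [h1]
        have hmi : m i ≠ 0 := (hm i).ne'
        field_simp
      have hpv : p v = -(dualNormSq m p) := by
        have hv_decomp : v = ∑ i, Pi.single i (v i) := (Finset.univ_sum_single v).symm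
        calc p v = p (∑ i, Pi.single i (v i)) := by rw [← hv_decomp]
          _ = ∑ i, p (Pi.single i (v i)) := map_sum p _ _
          _ = ∑ i, -((m i)⁻¹ * ‖pc i‖ ^ 2) := by
              refine Finset.sum_congr rfl fun i _ => ?_
              have h1 : p (Pi.single i (v i)) = pc i (v i) := rfl
              rw [h1]
              have h2 : v i = -((m i)⁻¹ • w i) := rfl
              rw [h2, map_neg, (pc i).map_smul, hpw i, smul_eq_mul]
          _ = -(∑ i, (m i)⁻¹ * ‖pc i‖ ^ 2) := by rw [Finset.sum_neg_distrib]
          _ = -(dualNormSq m p) := by rw [hdual]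
      have hineq := neg_fderiv_le hκ0 m hm u hu ψ hψ x₀ hmax hsep v
      rw [hpv, neg_neg, hKv] at hineq
      have hD2 : dualNormSq m p ≤ 2 * Preal κ m x₀ := by linarith
      rw [pot_eq_ofReal κ m hm x₀ hsep]
      calc ENNReal.ofReal (dualNormSq m p)
          ≤ ENNReal.ofReal (2 * Preal κ m x₀) := ENNReal.ofReal_le_ofReal hD2
        _ = 2 * ENNReal.ofReal (Preal κ m x₀) := by
            rw [ENNReal.ofReal_mul (by norm_num : (0:ℝ) ≤ 2)]
            norm_num
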